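/- Let d : (−ε, ε) × ℝ^m → ℝ be analytic with d(r, 0) = δ r^{2l−1} + O(r^{2l}) for some δ ≠ 0 and integer l ≥ 1, and suppose d(0, μ) = 0 for all μ. Then there exist a neighborhood of (0,0) and ε₀ > 0 such that for each parameter μ with |μ| < ε₀, the equation d(r, μ) = 0 has at most 2l − 2 nonzero roots r in that neighborhood; if moreover d is odd in r (d(−r, μ) = −d(r, μ)), it has at most l − 1 positive roots. -/

import Mathlib

open Asymptotics Filter

private lemma eval_zero_of_isBigO {f g : ℝ → ℝ} (h : f =O[nhds 0] g)
    (hg : g 0 = 0) : f 0 = 0 := by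
  rcases h.isBigOWith with ⟨C, hC⟩
  have hb : ‖f 0‖ ≤ 0 := by simpa [hg] using hC.bound.self_of_nhds
  simpa using norm_le_zero_iff.1 hb

private lemma poly_coeff_zero : ∀ (n : ℕ) (c : ℕ → ℝ),
    (fun y : ℝ => ∑ k ∈ Finset.range (n + 1), c k * y ^ k) =O[nhds 0] (fun y => |y| ^ (n + 1)) →
    ∀ k ≤ n, c k = 0 := by
  intro n
  induction n with
  | zero =>
    intro c h k hk
    interval_cases k
    have h0 := eval_zero_of_isBigO h (by simp)
    simpa using h0
  | succ n ih =>
    intro c h k hk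
    have hc0 : c 0 = 0 := by
      have h0 := eval_zero_of_isBigO h (by simp)
      have hs : ∑ k ∈ Finset.range (n + 1 + 1), c k * (0:ℝ) ^ k = c 0 := by
        rw [Finset.sum_range_succ']
        simp
      rw [hs] at h0
      exact h0
    set P : ℝ → ℝ := fun y => ∑ k ∈ Finset.range (n + 1), c (k + 1) * y ^ k with hPdef
    have hrw : ∀ y : ℝ, ∑ k ∈ Finset.range (n + 2), c k * y ^ k = y * P y := by
      intro y
      rw [Finset.sum_range_succ', hPdef]
      simp only [hc0, zero_mul, add_zero, pow_zero, Finset.mul_sum]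
      exact Finset.sum_congr rfl fun k _ => by ring
    obtain ⟨C, hC⟩ := h.isBigOWith
    have hCb := hC.bound
    have hpunct : ∀ᶠ y in nhdsWithin (0:ℝ) {0}ᶜ, |P y| ≤ C * |y| ^ (n + 1) := by
      filter_upwards [nhdsWithin_le_nhds hCb, self_mem_nhdsWithin] with y hy hy0
      have hy0' : (0:ℝ) < |y| := abs_pos.2 hy0
      rw [Real.norm_eq_abs, Real.norm_eq_abs, hrw, abs_mul,
        abs_of_nonneg (pow_nonneg (abs_nonneg y) _)] at hy
      have : |y| * |P y| ≤ |y| * (C * |y| ^ (n + 1)) := by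
        calc |y| * |P y| ≤ C * |y| ^ (n + 2) := hy
          _ = |y| * (C * |y| ^ (n + 1)) := by ring
      exact le_of_mul_le_mul_left this hy0'
    have hPcont : Continuous P := by
      apply continuous_finset_sum
      intro k _
      fun_prop
    have hP0 : P 0 = 0 := by
      have h1 : Tendsto P (nhdsWithin (0:ℝ) {0}ᶜ) (nhds (P 0)) :=
        (hPcont.continuousAt).mono_left nhdsWithin_le_nhds
      have h2 : Tendsto P (nhdsWithin (0:ℝ) {0}ᶜ) (nhds 0) := by
        apply squeeze_zero_norm' (by simpa [Real.norm_eq_abs] using hpunct)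
        have : Tendsto (fun y : ℝ => C * |y| ^ (n + 1)) (nhds 0) (nhds (C * |(0:ℝ)| ^ (n + 1))) :=
          (continuous_const.mul (continuous_abs.pow _)).tendsto 0
        simpa using this.mono_left nhdsWithin_le_nhds
      exact tendsto_nhds_unique h1 h2
    have hPbig : P =O[nhds 0] fun y => |y| ^ (n + 1) := by
      rw [isBigO_iff]
      refine ⟨C, ?_⟩
      have hev := eventually_nhdsWithin_iff.1 hpunct
      filter_upwards [hev] with y hy
      rcases eq_or_ne y 0 with rfl | hy0
      · simp [hP0]
      · simpa [Real.norm_eq_abs, abs_abs] using hy hy0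
    have hc' := ih _ hPbig
    rcases Nat.eq_zero_or_pos k with rfl | hkpos
    · exact hc0
    · obtain ⟨j, rfl⟩ := Nat.exists_eq_add_of_lt hkpos
      simpa using hc' j (by omega)

private lemma iter_deriv_val {n : ℕ} {f : ℝ → ℝ} {δ : ℝ} (hf : AnalyticAt ℝ f 0)
    (h : (fun r => f r - δ * r ^ n) =O[nhds 0] fun r => |r| ^ (n + 1)) :
    iteratedDeriv n f 0 = (n.factorial : ℝ) * δ := by
  obtain ⟨p, hp⟩ := hf
  have hps : (fun y : ℝ => f y - p.partialSum (n + 1) y) =O[nhds 0] fun y => |y| ^ (n + 1) := by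
    have := hp.isBigO_sub_partialSum_pow (n + 1)
    simpa [Real.norm_eq_abs] using this
  set c : ℕ → ℝ := fun k => p.coeff k - (if k = n then δ else 0) with hc
  have hsum : ∀ y : ℝ, ∑ k ∈ Finset.range (n + 1), c k * y ^ k
      = p.partialSum (n + 1) y - δ * y ^ n := by
    intro y
    have h1 : p.partialSum (n + 1) y = ∑ k ∈ Finset.range (n + 1), p.coeff k * y ^ k := by
      unfold FormalMultilinearSeries.partialSum
      exact Finset.sum_congr rfl fun k _ => by
        rw [FormalMultilinearSeries.apply_eq_pow_smul_coeff, smul_eq_mul]; ring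
    rw [h1]
    have h2 : ∑ k ∈ Finset.range (n + 1), (if k = n then δ else 0) * y ^ k = δ * y ^ n := by
      rw [Finset.sum_eq_single n]
      · simp
      · intro b _ hb; simp [hb]
      · intro hn; exact absurd (Finset.self_mem_range_succ n) hn
    rw [← h2, ← Finset.sum_sub_distrib]
    exact Finset.sum_congr rfl fun k _ => by
      simp only [hc]
      split <;> ring
  have hbig : (fun y : ℝ => ∑ k ∈ Finset.range (n + 1), c k * y ^ k)
      =O[nhds 0] fun y => |y| ^ (n + 1) := by
    have := (hps.neg_left).add h
    refine this.congr' ?_ (by rfl)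
    filter_upwards with y
    rw [hsum y]; ring
  have hcoeff : p.coeff n = δ := by
    have := poly_coeff_zero n c hbig n le_rfl
    simp [hc] at this
    linarith
  obtain ⟨R, hpb⟩ := hp
  have hfac := hpb.factorial_smul (1 : ℝ) n
  have h1 : iteratedDeriv n f 0 = iteratedFDeriv ℝ n f 0 (fun _ => 1) :=
    iteratedDeriv_eq_iteratedFDeriv
  have h2 : p.coeff n = p n (fun _ => 1) := by
    rw [FormalMultilinearSeries.apply_eq_pow_smul_coeff]; simp
  rw [h1, ← hfac, ← h2, hcoeff, nsmul_eq_mul]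

private lemma rolle_iter : ∀ (k : ℕ) (f : ℝ → ℝ) (a b : ℝ),
    (∀ x ∈ Set.Ioo a b, AnalyticAt ℝ f x) →
    ∀ (x : Fin (k + 1) → ℝ), StrictMono x → (∀ i, x i ∈ Set.Ioo a b) →
    (∀ i, f (x i) = 0) → ∃ c ∈ Set.Ioo a b, iteratedDeriv k f c = 0 := by
  intro k
  induction k with
  | zero =>
    intro f a b hf x hx hmem hz
    exact ⟨x 0, hmem 0, by simpa using hz 0⟩
  | succ k ih =>
    intro f a b hf x hx hmem hz
    have key : ∀ i : Fin (k + 1),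
        ∃ c, c ∈ Set.Ioo (x i.castSucc) (x i.succ) ∧ deriv f c = 0 := by
      intro i
      have hlt : x i.castSucc < x i.succ := hx Fin.castSucc_lt_succ
      have hsub : Set.Icc (x i.castSucc) (x i.succ) ⊆ Set.Ioo a b := fun y hy =>
        ⟨lt_of_lt_of_le (hmem i.castSucc).1 hy.1, lt_of_le_of_lt hy.2 (hmem i.succ).2⟩
      have hcont : ContinuousOn f (Set.Icc (x i.castSucc) (x i.succ)) := fun y hy =>
        ((hf y (hsub hy)).continuousAt).continuousWithinAt
      obtain ⟨c, hc1, hc2⟩ := exists_deriv_eq_zero hlt hcont (by rw [hz, hz])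
      exact ⟨c, hc1, hc2⟩
    choose y hy1 hy2 using key
    have hymono : StrictMono y := by
      intro i j hij
      calc y i < x i.succ := (hy1 i).2
        _ ≤ x j.castSucc := hx.monotone (Fin.succ_le_castSucc_iff.2 hij)
        _ < y j := (hy1 j).1
    have hymem : ∀ i, y i ∈ Set.Ioo a b := fun i =>
      ⟨lt_trans (hmem i.castSucc).1 (hy1 i).1, lt_trans (hy1 i).2 (hmem i.succ).2⟩
    have hf' : ∀ z ∈ Set.Ioo a b, AnalyticAt ℝ (deriv f) z := by
      intro z hz'
      exact (AnalyticOnNhd.deriv (fun w hw => hf w hw)) z hz'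
    obtain ⟨c, hc1, hc2⟩ := ih (deriv f) a b hf' y hymono hymem hy2
    exact ⟨c, hc1, by rw [iteratedDeriv_succ']; exact hc2⟩

private noncomputable def Dit (m : ℕ) (d : ℝ × (Fin m → ℝ) → ℝ) : ℕ → ℝ × (Fin m → ℝ) → ℝ
  | 0 => d
  | (k+1) => fun p => fderiv ℝ (Dit m d k) p (1, 0)

private lemma Dit_analytic {m : ℕ} {d : ℝ × (Fin m → ℝ) → ℝ} {q : ℝ × (Fin m → ℝ)}
    (hd : AnalyticAt ℝ d q) : ∀ k, AnalyticAt ℝ (Dit m d k) q := by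
  intro k
  induction k with
  | zero => exact hd
  | succ k ih =>
    have h1 : AnalyticAt ℝ (fderiv ℝ (Dit m d k)) q := ih.fderiv
    have h2 := ((ContinuousLinearMap.apply ℝ ℝ
      (((1:ℝ), (0 : Fin m → ℝ)))).analyticAt (fderiv ℝ (Dit m d k) q)).comp h1
    exact h2

theorem stmt15 (m : ℕ) (d : ℝ × (Fin m → ℝ) → ℝ) (l : ℕ) (δ : ℝ)
    (hl : 1 ≤ l) (hδ : δ ≠ 0)
    (hd : AnalyticAt ℝ d 0)
    (hexp : (fun r : ℝ => d (r, 0) - δ * r ^ (2 * l - 1)) =O[nhds 0] fun r => r ^ (2 * l))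
    (h0 : ∀ μ, d (0, μ) = 0) :
    ∃ ε₀ > (0 : ℝ), ∃ ρ > (0 : ℝ), ∀ μ : Fin m → ℝ, ‖μ‖ < ε₀ →
      ({r : ℝ | r ≠ 0 ∧ |r| < ρ ∧ d (r, μ) = 0}.Finite ∧
        {r : ℝ | r ≠ 0 ∧ |r| < ρ ∧ d (r, μ) = 0}.ncard ≤ 2 * l - 2) ∧
      ((∀ (r' : ℝ) (μ' : Fin m → ℝ), d (-r', μ') = -d (r', μ')) →
        {r : ℝ | 0 < r ∧ r < ρ ∧ d (r, μ) = 0}.Finite ∧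
          {r : ℝ | 0 < r ∧ r < ρ ∧ d (r, μ) = 0}.ncard ≤ l - 1) := by
  classical
  set n := 2 * l - 1 with hn
  have hn1 : n + 1 = 2 * l := by omega
  obtain ⟨ε₁, hε₁pos, hε₁⟩ := Metric.eventually_nhds_iff.1 hd.eventually_analyticAt
  have hg0 : AnalyticAt ℝ (fun r : ℝ => d (r, 0)) 0 := by
    have hin : AnalyticAt ℝ (fun r : ℝ => ((r, 0) : ℝ × (Fin m → ℝ))) 0 :=
      (analyticAt_id).prod analyticAt_const
    have hd' : AnalyticAt ℝ d ((0 : ℝ), (0 : Fin m → ℝ)) := by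
      rw [Prod.mk_zero_zero]; exact hd
    exact AnalyticAt.comp (f := fun r : ℝ => ((r, 0) : ℝ × (Fin m → ℝ))) hd' hin
  have hval : iteratedDeriv n (fun r : ℝ => d (r, 0)) 0 = (n.factorial : ℝ) * δ := by
    apply iter_deriv_val hg0
    have heq : (fun r : ℝ => r ^ (2 * l)) = fun r : ℝ => |r| ^ (n + 1) := by
      funext r
      rw [hn1, Even.pow_abs ⟨l, by ring⟩]
    rw [← heq]
    exact hexp
  have h00 : dist (0 : ℝ × (Fin m → ℝ)) 0 < ε₁ := by simpa using hε₁pos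
  have hDan : ∀ q : ℝ × (Fin m → ℝ), dist q 0 < ε₁ → ∀ k, AnalyticAt ℝ (Dit m d k) q :=
    fun q hq => Dit_analytic (hε₁ hq)
  have hrel : ∀ (k : ℕ) (r : ℝ) (μ : Fin m → ℝ), dist ((r, μ) : ℝ × (Fin m → ℝ)) 0 < ε₁ →
      iteratedDeriv k (fun s => d (s, μ)) r = Dit m d k (r, μ) := by
    intro k
    induction k with
    | zero =>
      intro r μ _
      rw [iteratedDeriv_zero]
      rfl
    | succ k ih =>
      intro r μ hmem
      rw [iteratedDeriv_succ]
      have hopen : IsOpen {s : ℝ | dist ((s, μ) : ℝ × (Fin m → ℝ)) 0 < ε₁} := by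
        have hcd : Continuous fun s : ℝ => dist ((s, μ) : ℝ × (Fin m → ℝ)) 0 := by fun_prop
        exact isOpen_lt hcd continuous_const
      have hev : iteratedDeriv k (fun s => d (s, μ)) =ᶠ[nhds r] fun s => Dit m d k (s, μ) := by
        filter_upwards [hopen.mem_nhds hmem] with s hs using ih s μ hs
      rw [hev.deriv_eq]
      have hDk : AnalyticAt ℝ (Dit m d k) (r, μ) := hDan _ hmem k
      have hder : HasDerivAt (fun s : ℝ => Dit m d k (s, μ))
          (fderiv ℝ (Dit m d k) (r, μ) (1, 0)) r :=
        hDk.differentiableAt.hasFDerivAt.comp_hasDerivAt r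
          (HasDerivAt.prodMk (hasDerivAt_id r) (hasDerivAt_const r μ))
      rw [hder.deriv]
      rfl
  have hD0 : Dit m d n 0 = (n.factorial : ℝ) * δ := by
    have hr0 := hrel n 0 0 (by rw [Prod.mk_zero_zero]; exact h00)
    rw [Prod.mk_zero_zero] at hr0
    rw [← hr0]
    exact hval
  have hDne : Dit m d n 0 ≠ 0 := by
    rw [hD0]
    exact mul_ne_zero (Nat.cast_ne_zero.2 n.factorial_ne_zero) hδ
  have hcontD : ContinuousAt (Dit m d n) 0 := (hDan 0 h00 n).continuousAt
  have hball : ∀ᶠ q : ℝ × (Fin m → ℝ) in nhds 0, dist q 0 < ε₁ := by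
    filter_upwards [Metric.ball_mem_nhds (0 : ℝ × (Fin m → ℝ)) hε₁pos] with q hq
    simpa [Metric.mem_ball] using hq
  obtain ⟨ρ, hρpos, hρ⟩ := Metric.eventually_nhds_iff.1 ((hcontD.eventually_ne hDne).and hball)
  refine ⟨ρ, hρpos, ρ, hρpos, ?_⟩
  intro μ hμ
  have hmemball : ∀ r : ℝ, |r| < ρ → dist ((r, μ) : ℝ × (Fin m → ℝ)) 0 < ρ := by
    intro r hr
    rw [Prod.dist_eq]
    apply max_lt
    · simpa [Real.dist_eq] using hr
    · simpa [dist_zero_right] using hμ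
  set Z : Set ℝ := {r : ℝ | |r| < ρ ∧ d (r, μ) = 0} with hZ
  have hcard : ∀ T : Finset ℝ, ↑T ⊆ Z → T.card ≤ n := by
    intro T hT
    by_contra hc
    push_neg at hc
    obtain ⟨T', hT'sub, hT'card⟩ := Finset.exists_subset_card_eq (Nat.succ_le_of_lt hc)
    set e := T'.orderIsoOfFin hT'card with he
    set x : Fin (n + 1) → ℝ := fun i => (e i : ℝ) with hx
    have hxmono : StrictMono x := fun i j hij => Subtype.coe_lt_coe.2 (e.strictMono hij)
    have hxZ : ∀ i, x i ∈ Z := fun i => hT (hT'sub (e i).2)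
    have hfa : ∀ z ∈ Set.Ioo (-ρ) ρ, AnalyticAt ℝ (fun s => d (s, μ)) z := by
      intro z hz
      have hz' : dist ((z, μ) : ℝ × (Fin m → ℝ)) 0 < ρ :=
        hmemball z (abs_lt.2 ⟨hz.1, hz.2⟩)
      have hdz : AnalyticAt ℝ d (z, μ) := hε₁ (hρ hz').2
      have hprod : AnalyticAt ℝ (fun s : ℝ => ((s, μ) : ℝ × (Fin m → ℝ))) z :=
        (analyticAt_id).prod analyticAt_const
      exact AnalyticAt.comp (f := fun s : ℝ => ((s, μ) : ℝ × (Fin m → ℝ))) hdz hprod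
    obtain ⟨c, hcIoo, hcder⟩ := rolle_iter n (fun s => d (s, μ)) (-ρ) ρ hfa x hxmono
      (fun i => Set.mem_Ioo.2 (abs_lt.1 (hxZ i).1)) (fun i => (hxZ i).2)
    have hcd : dist ((c, μ) : ℝ × (Fin m → ℝ)) 0 < ρ :=
      hmemball c (abs_lt.2 ⟨hcIoo.1, hcIoo.2⟩)
    rw [hrel n c μ (hρ hcd).2] at hcder
    exact (hρ hcd).1 hcder
  have hZfin : Z.Finite := by
    by_contra hinf
    obtain ⟨T, hTsub, hTcard⟩ := Set.Infinite.exists_subset_card_eq hinf (n + 1)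
    have := hcard T hTsub
    omega
  have hZcard : Z.ncard ≤ n := by
    have h1 := hcard hZfin.toFinset (by simp)
    rwa [Set.ncard_eq_toFinset_card _ hZfin]
  have h0Z : (0 : ℝ) ∈ Z := ⟨by simpa using hρpos, h0 μ⟩
  set S : Set ℝ := {r : ℝ | r ≠ 0 ∧ |r| < ρ ∧ d (r, μ) = 0} with hS
  have hSZ : S = Z \ {0} := by
    ext r
    simp only [hS, hZ, Set.mem_setOf_eq, Set.mem_diff, Set.mem_singleton_iff]
    tauto
  have hSfin : S.Finite := by
    rw [hSZ]; exact hZfin.diff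
  have hScard : S.ncard ≤ 2 * l - 2 := by
    rw [hSZ, Set.ncard_diff_singleton_of_mem h0Z]
    omega
  refine ⟨⟨hSfin, hScard⟩, ?_⟩
  intro hodd
  set P : Set ℝ := {r : ℝ | 0 < r ∧ r < ρ ∧ d (r, μ) = 0} with hP
  have hPS : P ⊆ S := fun r hr =>
    ⟨ne_of_gt hr.1, by rw [abs_of_pos hr.1]; exact hr.2.1, hr.2.2⟩
  have hPfin : P.Finite := hSfin.subset hPS
  have hNS : (fun r : ℝ => -r) '' P ⊆ S := by
    rintro _ ⟨r, hr, rfl⟩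
    refine ⟨neg_ne_zero.2 (ne_of_gt hr.1), ?_, ?_⟩
    · rw [abs_neg, abs_of_pos hr.1]; exact hr.2.1
    · rw [hodd r μ, hr.2.2, neg_zero]
  have hdisj : Disjoint P ((fun r : ℝ => -r) '' P) := by
    rw [Set.disjoint_left]
    rintro a ha ⟨r, hr, rfl⟩
    exact absurd ha.1 (not_lt.2 (neg_nonpos.2 (le_of_lt hr.1)))
  have hcount : P.ncard + P.ncard ≤ S.ncard := by
    have himg : ((fun r : ℝ => -r) '' P).ncard = P.ncard :=
      Set.ncard_image_of_injective P neg_injective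
    calc P.ncard + P.ncard = P.ncard + ((fun r : ℝ => -r) '' P).ncard := by rw [himg]
      _ = (P ∪ (fun r : ℝ => -r) '' P).ncard :=
        (Set.ncard_union_eq hdisj hPfin (hPfin.image _)).symm
      _ ≤ S.ncard := Set.ncard_le_ncard (Set.union_subset hPS hNS) hSfin
  exact ⟨hPfin, by omega⟩
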